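/- Let W ~ N(μ', Σ') where Σ' ∈ ℝ^{2d×2d} is symmetric idempotent of rank 2d−1, and let A be positive semi-definite. Write Σ' = BBᵀ with BᵀB = I_{2d−1}, let H be an orthogonal matrix with Hᵀ(BᵀAB)H = Diag(λ₁,…,λ_{2d−1}) where λ₁ ≥ … ≥ λ_r > 0 = λ_{r+1} = … = λ_{2d−1}, and set bᵀ = (μ')ᵀABH. Then WᵀAW has the same distribution as ∑_{j=1}^r λⱼ · χ²_{1,j}((bⱼ/λⱼ)²) + N(κ, ∑_{j>r} 4bⱼ²), where the χ²_{1,j}(νⱼ) are independent noncentral chi-squared random variables with one degree of freedom and noncentrality νⱼ = (bⱼ/λⱼ)², the Gaussian term is independent of them, and κ = (μ')ᵀAμ' − ∑_{j=1}^r bⱼ²/λⱼ. -/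

import Mathlib

open MeasureTheory ProbabilityTheory Matrix

/-- The law of i.i.d. standard normals indexed by `ι`. -/
noncomputable def stdGaussian (ι : Type*) [Fintype ι] : Measure (ι → ℝ) :=
  Measure.pi fun _ => gaussianReal 0 1

open scoped ENNReal NNReal Real

lemma measurable_mulVec' {m n : ℕ} (M : Matrix (Fin m) (Fin n) ℝ) :
    Measurable fun y : Fin n → ℝ => M.mulVec y := by
  refine measurable_pi_lambda _ fun i => ?_
  simpa [Matrix.mulVec, dotProduct] using
    Finset.measurable_sum Finset.univ (fun k _ => (by fun_prop : Measurable fun c : Fin n → ℝ => M i k * c k))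

lemma lintegral_pi_prod : ∀ {n : ℕ} (μ : Fin n → Measure ℝ), (∀ i, SigmaFinite (μ i)) →
    ∀ (f : Fin n → ℝ → ℝ≥0∞), (∀ i, Measurable (f i)) →
    ∫⁻ x, ∏ i, f i (x i) ∂Measure.pi μ = ∏ i, ∫⁻ x, f i x ∂μ i
  | 0, μ, hσ, f, hf => by
    haveI := hσ
    rw [Measure.pi_of_empty μ]
    simp
  | (n+1), μ, hσ, f, hf => by
    haveI := hσ
    have hmp := (measurePreserving_piFinSuccAbove μ 0).symm
    have hg : Measurable fun x : Fin (n+1) → ℝ => ∏ i, f i (x i) :=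
      Finset.measurable_prod _ fun i _ => (hf i).comp (measurable_pi_apply i)
    rw [← hmp.lintegral_comp hg]
    simp_rw [MeasurableEquiv.piFinSuccAbove_symm_apply, Fin.insertNthEquiv,
      Fin.prod_univ_succ, Fin.insertNth_zero, Equiv.coe_fn_mk, Fin.zero_succAbove, cast_eq, Fin.cons_zero, Fin.cons_succ]
    rw [lintegral_prod_mul (f := f 0) (g := fun x : Fin n → ℝ => ∏ i : Fin n, f i.succ (x i))
      (hf 0).aemeasurable
      ((Finset.measurable_prod _ fun i _ =>
        (hf i.succ).comp (measurable_pi_apply i)).aemeasurable)]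
    rw [lintegral_pi_prod (fun j => μ j.succ) (fun j => hσ _)
      (fun j => f j.succ) (fun j => hf _)]

lemma stdGaussian_eq_withDensity (n : ℕ) :
    stdGaussian (Fin n)
      = (volume : Measure (Fin n → ℝ)).withDensity fun x => ∏ i, gaussianPDF 0 1 (x i) := by
  have h1 : gaussianReal 0 1 = (volume : Measure ℝ).withDensity (gaussianPDF 0 1) :=
    gaussianReal_of_var_ne_zero 0 one_ne_zero
  rw [_root_.stdGaussian]
  apply Measure.pi_eq
  intro s hs
  rw [withDensity_apply _ (MeasurableSet.univ_pi hs), ← lintegral_indicator (MeasurableSet.univ_pi hs)]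
  have key : ∀ x : Fin n → ℝ, (Set.pi Set.univ s).indicator (fun x => ∏ i, gaussianPDF 0 1 (x i)) x
      = ∏ i, (s i).indicator (gaussianPDF 0 1) (x i) := by
    intro x
    by_cases hx : x ∈ Set.pi Set.univ s
    · rw [Set.indicator_of_mem hx]
      exact Finset.prod_congr rfl fun i _ =>
        (Set.indicator_of_mem (hx i (Set.mem_univ i)) _).symm
    · rw [Set.indicator_of_notMem hx]
      rw [Set.mem_pi] at hx
      push_neg at hx
      obtain ⟨i, -, hi⟩ := hx
      exact (Finset.prod_eq_zero (Finset.mem_univ i)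
        (by simp [Set.indicator_of_notMem hi])).symm
  simp_rw [key]
  rw [volume_pi, lintegral_pi_prod (fun _ => volume) (fun _ => inferInstance) _
    (fun i => (measurable_gaussianPDF 0 1).indicator (hs i))]
  exact Finset.prod_congr rfl fun i _ => by
    rw [lintegral_indicator (hs i), h1, withDensity_apply _ (hs i)]

lemma map_withDensity_comp {α β : Type*} [MeasurableSpace α] [MeasurableSpace β] (μ : Measure α)
    (f : α → β) (hf : Measurable f) (g : β → ℝ≥0∞) (hg : Measurable g) :
    (μ.withDensity (fun x => g (f x))).map f = (μ.map f).withDensity g := by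
  ext s hs
  rw [Measure.map_apply hf hs, withDensity_apply _ (hf hs), withDensity_apply _ hs,
    setLIntegral_map hs hg hf]

lemma prod_gaussianPDF_comp {n : ℕ} (O : Matrix (Fin n) (Fin n) ℝ) (hO : Oᵀ * O = 1)
    (y : Fin n → ℝ) :
    (∏ i, gaussianPDF 0 1 (O.mulVec y i)) = ∏ i, gaussianPDF 0 1 (y i) := by
  have hsum : ∑ i, (O.mulVec y i)^2 = ∑ i, (y i)^2 := by
    have h1 : O.mulVec y ⬝ᵥ O.mulVec y = y ⬝ᵥ y := by
      rw [Matrix.dotProduct_mulVec, ← Matrix.mulVec_transpose, Matrix.mulVec_mulVec, hO,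
        Matrix.one_mulVec]
    simpa [dotProduct, pow_two] using h1
  have key : ∀ x : Fin n → ℝ, (∏ i, gaussianPDFReal 0 1 (x i))
      = (Real.sqrt (2*Real.pi))⁻¹ ^ n * Real.exp (-(∑ i, (x i)^2) / 2) := by
    intro x
    calc ∏ i, gaussianPDFReal 0 1 (x i)
        = ∏ i, ((Real.sqrt (2*Real.pi))⁻¹ * Real.exp (-((x i)^2/2))) := by
          refine Finset.prod_congr rfl fun i _ => ?_
          simp [gaussianPDFReal, neg_div]
      _ = (Real.sqrt (2*Real.pi))⁻¹ ^ n * Real.exp (-(∑ i, (x i)^2) / 2) := by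
          rw [Finset.prod_mul_distrib, Finset.prod_const, Finset.card_univ, Fintype.card_fin,
            ← Real.exp_sum]
          congr 1
          rw [Finset.sum_neg_distrib, ← Finset.sum_div, neg_div]
  have hnn : ∀ x : Fin n → ℝ, ∀ i ∈ Finset.univ, 0 ≤ gaussianPDFReal 0 1 (x i) :=
    fun x i _ => gaussianPDFReal_nonneg 0 1 (x i)
  simp only [gaussianPDF]
  rw [← ENNReal.ofReal_prod_of_nonneg (hnn _), ← ENNReal.ofReal_prod_of_nonneg (hnn _),
    key, key, hsum]

set_option maxHeartbeats 1000000 in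
lemma stdGaussian_map_orth {n : ℕ} (O : Matrix (Fin n) (Fin n) ℝ) (hO : Oᵀ * O = 1) :
    (stdGaussian (Fin n)).map O.mulVec = stdGaussian (Fin n) := by
  have hdet2 : O.det * O.det = 1 := by
    have h := congrArg Matrix.det hO
    rwa [Matrix.det_mul, Matrix.det_transpose, Matrix.det_one] at h
  have hdet : O.det ≠ 0 := by
    intro h
    rw [h, mul_zero] at hdet2
    exact zero_ne_one hdet2
  have habs : |O.det⁻¹| = 1 := by
    have h2 : |O.det| * |O.det| = 1 := by rw [← abs_mul, hdet2, abs_one]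
    have h1 : |O.det| = 1 := by nlinarith [abs_nonneg O.det]
    rw [abs_inv, h1, inv_one]
  have hvol : Measure.map O.mulVec (volume : Measure (Fin n → ℝ)) = volume := by
    have h := Real.map_matrix_volume_pi_eq_smul_volume_pi hdet
    have hcoe : ⇑(Matrix.toLin' O) = O.mulVec := funext fun v => Matrix.toLin'_apply O v
    rw [hcoe, habs] at h
    simpa using h
  have hGmeas : Measurable fun x : Fin n → ℝ => ∏ i, gaussianPDF 0 1 (x i) :=
    Finset.measurable_prod _ fun i _ => (measurable_gaussianPDF 0 1).comp (measurable_pi_apply i)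
  rw [stdGaussian_eq_withDensity]
  have hcomp : (fun x : Fin n → ℝ => ∏ i, gaussianPDF 0 1 (x i))
      = fun y : Fin n → ℝ => ∏ i, gaussianPDF 0 1 (O.mulVec y i) := by
    funext y
    exact (prod_gaussianPDF_comp O hO y).symm
  conv_lhs => rw [hcomp]
  rw [map_withDensity_comp volume O.mulVec (measurable_mulVec' O)
    (fun x => ∏ i, gaussianPDF 0 1 (x i)) hGmeas, hvol]

lemma stdGaussian_map_proj {m n : ℕ} (h : m ≤ n) :
    (stdGaussian (Fin n)).map (fun y (i : Fin m) => y (Fin.castLE h i))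
      = stdGaussian (Fin m) := by
  classical
  have hmeas : Measurable fun (y : Fin n → ℝ) (i : Fin m) => y (Fin.castLE h i) :=
    measurable_pi_lambda _ fun i => measurable_pi_apply _
  rw [_root_.stdGaussian]
  apply Eq.symm
  show (Measure.pi fun _ : Fin m => gaussianReal 0 1) = _
  apply Measure.pi_eq
  intro s hs
  rw [Measure.map_apply hmeas (MeasurableSet.univ_pi hs)]
  set t : Fin n → Set ℝ := fun j => if hj : (j : ℕ) < m then s ⟨j, hj⟩ else Set.univ with ht
  have hpre : (fun y (i : Fin m) => y (Fin.castLE h i)) ⁻¹' (Set.pi Set.univ s)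
      = Set.pi Set.univ t := by
    ext y
    simp only [Set.mem_preimage, Set.mem_pi, Set.mem_univ, true_implies]
    constructor
    · intro hy j
      by_cases hj : (j : ℕ) < m
      · have := hy ⟨(j : ℕ), hj⟩
        simp only [ht]
        rw [dif_pos hj]
        exact this
      · simp only [ht]
        rw [dif_neg hj]
        trivial
    · intro hy i
      have := hy (Fin.castLE h i)
      simp only [ht] at this
      rwa [dif_pos (show ((Fin.castLE h i : Fin n) : ℕ) < m from i.isLt)] at this
  rw [hpre]
  show (Measure.pi fun _ => gaussianReal 0 1) (Set.pi Set.univ t) = _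
  rw [Measure.pi_pi]
  have h1 : ∀ j : Fin n, gaussianReal 0 1 (t j)
      = if hj : (j : ℕ) < m then gaussianReal 0 1 (s ⟨j, hj⟩) else 1 := by
    intro j
    by_cases hj : (j : ℕ) < m
    · simp only [ht]; rw [dif_pos hj, dif_pos hj]
    · simp only [ht]; rw [dif_neg hj, dif_neg hj]; exact measure_univ
  simp_rw [h1]
  rw [Fintype.prod_dite]
  simp only [Finset.prod_const_one, mul_one]
  let e : {j : Fin n // (j : ℕ) < m} ≃ Fin m :=
    { toFun := fun j => ⟨(j.1 : ℕ), j.2⟩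
      invFun := fun i => ⟨Fin.castLE h i, i.isLt⟩
      left_inv := fun j => Subtype.ext (Fin.ext rfl)
      right_inv := fun i => Fin.ext rfl }
  exact Equiv.prod_comp e fun i => gaussianReal 0 1 (s i)

set_option maxHeartbeats 1000000 in
lemma stdGaussian_map_rect {m n : ℕ} (h : m ≤ n) (M : Matrix (Fin m) (Fin n) ℝ)
    (hM : M * Mᵀ = 1) :
    (stdGaussian (Fin n)).map M.mulVec = stdGaussian (Fin m) := by
  classical
  set v : Fin n → EuclideanSpace ℝ (Fin n) := fun j =>
    if hj : (j : ℕ) < m then WithLp.toLp 2 (fun k => M ⟨j, hj⟩ k) else 0 with hv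
  have hcard : Module.finrank ℝ (EuclideanSpace ℝ (Fin n)) = Fintype.card (Fin n) := by simp
  have horth : Orthonormal ℝ (({j : Fin n | (j : ℕ) < m}).restrict v) := by
    rw [orthonormal_iff_ite]
    rintro ⟨i, hi⟩ ⟨j, hj⟩
    have hinner : (inner ℝ (({j : Fin n | (j : ℕ) < m}).restrict v ⟨i, hi⟩)
        (({j : Fin n | (j : ℕ) < m}).restrict v ⟨j, hj⟩) : ℝ)
        = ∑ k, M ⟨(i : ℕ), hi⟩ k * M ⟨(j : ℕ), hj⟩ k := by
      simp only [Set.restrict_apply, hv, PiLp.inner_apply, RCLike.inner_apply, conj_trivial]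
      refine Finset.sum_congr rfl fun k _ => ?_
      change ((if h : (j : ℕ) < m then WithLp.toLp 2 (fun k => M ⟨j, h⟩ k) else 0 : EuclideanSpace ℝ (Fin n))).ofLp k
          * ((if h : (i : ℕ) < m then WithLp.toLp 2 (fun k => M ⟨i, h⟩ k) else 0 : EuclideanSpace ℝ (Fin n))).ofLp k = _
      rw [dif_pos (show ((i : Fin n) : ℕ) < m from hi), dif_pos (show ((j : Fin n) : ℕ) < m from hj)]
      exact mul_comm _ _
    rw [hinner]
    have h2 := congrFun (congrFun hM ⟨(i : ℕ), hi⟩) ⟨(j : ℕ), hj⟩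
    rw [Matrix.mul_apply, Matrix.one_apply] at h2
    simp only [Matrix.transpose_apply] at h2
    rw [h2]
    congr 1
    simp [Fin.ext_iff, Subtype.ext_iff]
  obtain ⟨bb, hbb⟩ := horth.exists_orthonormalBasis_extension_of_card_eq hcard
  set O : Matrix (Fin n) (Fin n) ℝ := Matrix.of (fun j k => bb j k) with hOdef
  have hOrow : O * Oᵀ = 1 := by
    ext i j
    rw [Matrix.mul_apply, Matrix.one_apply]
    have h3 := orthonormal_iff_ite.mp bb.orthonormal i j
    simp only [PiLp.inner_apply, RCLike.inner_apply, conj_trivial] at h3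
    simpa [hOdef, Matrix.transpose_apply, mul_comm] using h3
  have hO : Oᵀ * O = 1 := mul_eq_one_comm.mp hOrow
  have hmeas_proj : Measurable fun (y : Fin n → ℝ) (i : Fin m) => y (Fin.castLE h i) :=
    measurable_pi_lambda _ fun i => measurable_pi_apply _
  have hproj : M.mulVec = (fun y (i : Fin m) => y (Fin.castLE h i)) ∘ O.mulVec := by
    funext y i
    have hmem : ((Fin.castLE h i : Fin n) : ℕ) < m := i.isLt
    simp only [Function.comp_apply, Matrix.mulVec, dotProduct]
    refine Finset.sum_congr rfl fun k _ => ?_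
    have hOk : O (Fin.castLE h i) k = M i k := by
      show bb (Fin.castLE h i) k = M i k
      rw [hbb _ hmem]
      show ((if hj : ((Fin.castLE h i : Fin n) : ℕ) < m
        then WithLp.toLp 2 (fun k => M ⟨((Fin.castLE h i : Fin n) : ℕ), hj⟩ k) else 0 : EuclideanSpace ℝ (Fin n))).ofLp k = M i k
      rw [dif_pos hmem]
      exact congrFun (congrArg M (Fin.ext rfl)) k
    rw [hOk]
  rw [hproj, ← Measure.map_map hmeas_proj (measurable_mulVec' O),
    stdGaussian_map_orth O hO, stdGaussian_map_proj h]

/-- For `W ~ N(μ', Σ')` with `Σ'` symmetric idempotent of rank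
`2d−1`, `A` positive semi-definite, `Σ' = BBᵀ` with `BᵀB = I`, `H` orthogonal
diagonalizing `BᵀAB` with eigenvalues `λ₁ ≥ … ≥ λ_r > 0 = λ_{r+1} = … = λ_{2d−1}`
and `bᵀ = μ'ᵀABH`, the quadratic form `WᵀAW` is distributed as
`∑_{j≤r} λⱼ χ²_{1,j}((bⱼ/λⱼ)²) + N(κ, ∑_{j>r} 4bⱼ²)` with
`κ = μ'ᵀAμ' − ∑_{j≤r} bⱼ²/λⱼ`, the noncentral chi-squared terms and the Gaussian
term being independent.  This mixture is encoded as the pushforward of a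
standard Gaussian `y ~ N(0, I_{2d−1})` under
`y ↦ ∑_{j<r} λⱼ (yⱼ + bⱼ/λⱼ)² + ∑_{j≥r} 2 bⱼ yⱼ + κ`, and `N(μ', Σ')` (with `Σ'`
symmetric idempotent) as the law of `Σ'·y + μ'`. -/
theorem stmt_14 {Ω : Type*} [MeasurableSpace Ω] (μ : Measure Ω) [IsProbabilityMeasure μ]
    (d r : ℕ) (hd : 0 < d) (hr : r ≤ 2 * d - 1)
    (S : Matrix (Fin (2 * d)) (Fin (2 * d)) ℝ) (hsym : S.IsSymm) (hidem : S * S = S)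
    (hrank : S.rank = 2 * d - 1)
    (A : Matrix (Fin (2 * d)) (Fin (2 * d)) ℝ) (hA : A.PosSemidef)
    (μ' : Fin (2 * d) → ℝ) (W : Ω → Fin (2 * d) → ℝ)
    (hW : μ.map W = (stdGaussian (Fin (2 * d))).map fun y => S.mulVec y + μ')
    (B : Matrix (Fin (2 * d)) (Fin (2 * d - 1)) ℝ) (hB1 : B * Bᵀ = S) (hB2 : Bᵀ * B = 1)
    (H : Matrix (Fin (2 * d - 1)) (Fin (2 * d - 1)) ℝ)
    (hH1 : Hᵀ * H = 1) (hH2 : H * Hᵀ = 1)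
    (lam : Fin (2 * d - 1) → ℝ)
    (hdiag : Hᵀ * (Bᵀ * A * B) * H = Matrix.diagonal lam)
    (hmono : Antitone lam)
    (hpos : ∀ j : Fin (2 * d - 1), (j : ℕ) < r → 0 < lam j)
    (hzero : ∀ j : Fin (2 * d - 1), r ≤ (j : ℕ) → lam j = 0)
    (b : Fin (2 * d - 1) → ℝ) (hb : b = Matrix.vecMul μ' (A * B * H))
    (κ : ℝ)
    (hκ : κ = μ' ⬝ᵥ A.mulVec μ' - ∑ j : Fin (2 * d - 1), if (j : ℕ) < r then b j ^ 2 / lam j else 0) :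
    μ.map (fun ω => W ω ⬝ᵥ A.mulVec (W ω)) =
      (stdGaussian (Fin (2 * d - 1))).map
        (fun y =>
          (∑ j : Fin (2 * d - 1), if (j : ℕ) < r then lam j * (y j + b j / lam j) ^ 2 else 2 * b j * y j)
            + κ) := by
  classical
  have hAsym : Aᵀ = A := by
    ext i j
    have h2 := congrFun (congrFun hA.1 i) j
    simpa [Matrix.conjTranspose_apply, Matrix.transpose_apply] using h2
  have hsymdot : ∀ p : Fin (2 * d) → ℝ, p ⬝ᵥ A.mulVec μ' = μ' ⬝ᵥ A.mulVec p := by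
    intro p
    rw [Matrix.dotProduct_mulVec μ', ← Matrix.mulVec_transpose, hAsym, dotProduct_comm]
  have hdiag' : (B * H)ᵀ * (A * (B * H)) = Matrix.diagonal lam := by
    rw [Matrix.transpose_mul]
    calc Hᵀ * Bᵀ * (A * (B * H)) = Hᵀ * (Bᵀ * A * B) * H := by
          simp only [Matrix.mul_assoc]
      _ = Matrix.diagonal lam := hdiag
  have hmm : B * H * (Hᵀ * Bᵀ) = B * Bᵀ :=
    calc B * H * (Hᵀ * Bᵀ) = B * (H * (Hᵀ * Bᵀ)) := by rw [Matrix.mul_assoc]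
      _ = B * Bᵀ := by rw [← Matrix.mul_assoc H Hᵀ Bᵀ, hH2, Matrix.one_mul]
  have hquad : ∀ u : Fin (2 * d - 1) → ℝ,
      ((B * H).mulVec u) ⬝ᵥ A.mulVec ((B * H).mulVec u)
        = ∑ j : Fin (2 * d - 1), lam j * (u j) ^ 2 := by
    intro u
    rw [Matrix.mulVec_mulVec, Matrix.dotProduct_mulVec, ← Matrix.vecMul_transpose,
      Matrix.vecMul_vecMul, hdiag']
    simp only [dotProduct, Matrix.vecMul_diagonal]
    exact Finset.sum_congr rfl fun j _ => by ring
  have hcross : ∀ u : Fin (2 * d - 1) → ℝ,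
      μ' ⬝ᵥ A.mulVec ((B * H).mulVec u) = b ⬝ᵥ u := by
    intro u
    rw [Matrix.mulVec_mulVec, Matrix.dotProduct_mulVec μ', hb]
    congr 1
    rw [Matrix.mul_assoc]
  have hq : ∀ y : Fin (2 * d) → ℝ,
      (S.mulVec y + μ') ⬝ᵥ A.mulVec (S.mulVec y + μ')
        = (∑ j : Fin (2 * d - 1), lam j * ((Hᵀ * Bᵀ).mulVec y j) ^ 2)
          + 2 * (b ⬝ᵥ (Hᵀ * Bᵀ).mulVec y) + μ' ⬝ᵥ A.mulVec μ' := by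
    intro y
    have hSy : S.mulVec y = (B * H).mulVec ((Hᵀ * Bᵀ).mulVec y) := by
      rw [Matrix.mulVec_mulVec, hmm, hB1]
    rw [hSy]
    generalize (Hᵀ * Bᵀ).mulVec y = u
    rw [Matrix.mulVec_add, dotProduct_add, add_dotProduct, add_dotProduct,
      hsymdot ((B * H).mulVec u), hquad u, hcross u]
    ring
  have hF : ∀ u : Fin (2 * d - 1) → ℝ,
      (∑ j : Fin (2 * d - 1), if (j : ℕ) < r then lam j * (u j + b j / lam j) ^ 2
          else 2 * b j * u j) + κ
        = (∑ j : Fin (2 * d - 1), lam j * (u j) ^ 2) + 2 * (b ⬝ᵥ u) + μ' ⬝ᵥ A.mulVec μ' := by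
    intro u
    have hsplit : ∀ j : Fin (2 * d - 1),
        (if (j : ℕ) < r then lam j * (u j + b j / lam j) ^ 2 else 2 * b j * u j)
          = lam j * (u j) ^ 2 + 2 * (b j * u j)
            + (if (j : ℕ) < r then b j ^ 2 / lam j else 0) := by
      intro j
      by_cases hj : (j : ℕ) < r
      · have hne : lam j ≠ 0 := ne_of_gt (hpos j hj)
        simp only [hj, if_true]
        field_simp
        ring
      · have h0 : lam j = 0 := hzero j (le_of_not_gt hj)
        simp only [hj, if_false]
        rw [h0]
        ring
    simp_rw [hsplit]
    rw [Finset.sum_add_distrib, Finset.sum_add_distrib, hκ]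
    have hdot : (2 : ℝ) * (b ⬝ᵥ u) = ∑ j : Fin (2 * d - 1), 2 * (b j * u j) := by
      rw [show b ⬝ᵥ u = ∑ j : Fin (2 * d - 1), b j * u j from rfl, Finset.mul_sum]
    rw [hdot]
    ring
  have hqm : Measurable fun w : Fin (2 * d) → ℝ => w ⬝ᵥ A.mulVec w := by
    show Measurable fun w : Fin (2 * d) → ℝ => ∑ i, w i * A.mulVec w i
    refine Finset.measurable_sum _ fun i _ => ?_
    exact (measurable_pi_apply i).mul ((measurable_pi_apply i).comp (measurable_mulVec' A))
  have haff : Measurable fun y : Fin (2 * d) → ℝ => S.mulVec y + μ' :=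
    (measurable_mulVec' S).add_const μ'
  have hT : Measurable ((Hᵀ * Bᵀ).mulVec) := measurable_mulVec' _
  have hFmeas : Measurable fun u : Fin (2 * d - 1) → ℝ =>
      (∑ j : Fin (2 * d - 1), if (j : ℕ) < r then lam j * (u j + b j / lam j) ^ 2
        else 2 * b j * u j) + κ := by
    refine Measurable.add_const ?_ κ
    refine Finset.measurable_sum _ fun j _ => ?_
    split_ifs with hj
    · exact (((measurable_pi_apply j).add_const _).pow_const 2).const_mul _
    · exact (measurable_pi_apply j).const_mul _
  haveI : IsProbabilityMeasure (stdGaussian (Fin (2 * d))) := by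
    rw [_root_.stdGaussian]; infer_instance
  have hWae : AEMeasurable W μ := by
    by_contra hc
    rw [Measure.map_of_not_aemeasurable hc] at hW
    have hP : IsProbabilityMeasure ((stdGaussian (Fin (2 * d))).map fun y => S.mulVec y + μ') :=
      Measure.isProbabilityMeasure_map haff.aemeasurable
    have h1 := hP.measure_univ
    rw [← hW] at h1
    simp at h1
  have hrect : (Hᵀ * Bᵀ) * (Hᵀ * Bᵀ)ᵀ = 1 := by
    rw [Matrix.transpose_mul, Matrix.transpose_transpose, Matrix.transpose_transpose]
    calc Hᵀ * Bᵀ * (B * H) = Hᵀ * (Bᵀ * B) * H := by simp only [Matrix.mul_assoc]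
      _ = 1 := by rw [hB2, Matrix.mul_one, hH1]
  calc μ.map (fun ω => W ω ⬝ᵥ A.mulVec (W ω))
      = (μ.map W).map (fun w => w ⬝ᵥ A.mulVec w) :=
        (AEMeasurable.map_map_of_aemeasurable hqm.aemeasurable hWae).symm
    _ = ((stdGaussian (Fin (2 * d))).map (fun y => S.mulVec y + μ')).map
          (fun w => w ⬝ᵥ A.mulVec w) := by rw [hW]
    _ = (stdGaussian (Fin (2 * d))).map
          ((fun w => w ⬝ᵥ A.mulVec w) ∘ (fun y => S.mulVec y + μ')) :=
        Measure.map_map hqm haff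
    _ = (stdGaussian (Fin (2 * d))).map
          ((fun u => (∑ j : Fin (2 * d - 1), if (j : ℕ) < r then lam j * (u j + b j / lam j) ^ 2
              else 2 * b j * u j) + κ) ∘ ((Hᵀ * Bᵀ).mulVec)) := by
        congr 1
        funext y
        simp only [Function.comp_apply]
        rw [hq y, hF ((Hᵀ * Bᵀ).mulVec y)]
    _ = ((stdGaussian (Fin (2 * d))).map ((Hᵀ * Bᵀ).mulVec)).map
          (fun u => (∑ j : Fin (2 * d - 1), if (j : ℕ) < r then lam j * (u j + b j / lam j) ^ 2
              else 2 * b j * u j) + κ) := (Measure.map_map hFmeas hT).symm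
    _ = (stdGaussian (Fin (2 * d - 1))).map
          (fun u => (∑ j : Fin (2 * d - 1), if (j : ℕ) < r then lam j * (u j + b j / lam j) ^ 2
              else 2 * b j * u j) + κ) := by
        rw [stdGaussian_map_rect (by omega) _ hrect]
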